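/- Let d ≥ 2 and let F ∈ S^{d×n(d)} be the matrix defined below, where n(d) = d(d+1)/2 + 2 if d ≡ 0 mod 2, n(d) = d(d+1)/2 + 1 if d ≡ 1 mod 4, and n(d) = d(d+1)/2 + 3 if d ≡ 3 mod 4. Then in F_2[x_1,…,x_d]: (i) Σ_{j=1}^{n(d)} (α_j^F + β_j^F) = 0 (the degree-1 part of w(F) vanishes); (ii) the characteristic ideal I_F equals J; and (iii) w(F) − (1 + x_1²) ∈ J while x_1² ∉ J. (These are the algebraic expressions of orientability, of the characteristic ideal, and of the nonvanishing of the second Stiefel–Whitney class of the flat manifold defined by F, all of whose higher Stiefel–Whitney classes vanish.) -/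

import Mathlib

open MvPolynomial

abbrev S4 : Type := ZMod 2 × ZMod 2

def Sα (s : S4) : ZMod 2 := s.1
def Sβ (s : S4) : ZMod 2 := s.2

def s0 : S4 := (0, 0)
def s1 : S4 := (1, 1)
def s2 : S4 := (1, 0)
def s3 : S4 := (0, 1)

/-- The linear form `α_j^A = Σ_i α(A_{ij}) x_i`. -/
noncomputable def alphaP {d : ℕ} {ι : Type*} (A : Matrix (Fin d) ι S4) (j : ι) :
    MvPolynomial (Fin d) (ZMod 2) := ∑ i, C (Sα (A i j)) * X i

/-- The linear form `β_j^A = Σ_i β(A_{ij}) x_i`. -/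
noncomputable def betaP {d : ℕ} {ι : Type*} (A : Matrix (Fin d) ι S4) (j : ι) :
    MvPolynomial (Fin d) (ZMod 2) := ∑ i, C (Sβ (A i j)) * X i

/-- `θ_j^A = α_j^A · β_j^A`. -/
noncomputable def thetaP {d : ℕ} {ι : Type*} (A : Matrix (Fin d) ι S4) (j : ι) :
    MvPolynomial (Fin d) (ZMod 2) := alphaP A j * betaP A j

/-- The characteristic ideal `I_A = ⟨θ_1^A, …, θ_n^A⟩`. -/
noncomputable def charIdeal {d : ℕ} {ι : Type*} (A : Matrix (Fin d) ι S4) :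
    Ideal (MvPolynomial (Fin d) (ZMod 2)) := Ideal.span (Set.range (thetaP A))

/-- The Stiefel–Whitney polynomial `w(A) = Π_j (1 + α_j^A + β_j^A)`. -/
noncomputable def swPoly {d : ℕ} {ι : Type*} [Fintype ι] (A : Matrix (Fin d) ι S4) :
    MvPolynomial (Fin d) (ZMod 2) := ∏ j, (1 + alphaP A j + betaP A j)

/-- The ideal `J = ⟨{x_i² + x_j² : i ≠ j} ∪ {x_i x_j : i ≠ j}⟩`. -/
noncomputable def Jideal (d : ℕ) : Ideal (MvPolynomial (Fin d) (ZMod 2)) :=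
  Ideal.span ({q | ∃ i j : Fin d, i ≠ j ∧ q = X i ^ 2 + X j ^ 2} ∪
              {q | ∃ i j : Fin d, i ≠ j ∧ q = X i * X j})

/-- `A₀ ∈ S^{d×(d-1)}`: the `l`-th column has entry `1` in rows `l` and `d`, `0` elsewhere. -/
def matA0 (d : ℕ) : Matrix (Fin d) (Fin (d - 1)) S4 :=
  fun i l => if i.val = l.val ∨ i.val = d - 1 then s1 else s0

/-- Index set for the columns of `A₁`: pairs `1 ≤ i < j ≤ d`. -/
abbrev PairIdx (d : ℕ) : Type := {p : Fin d × Fin d // p.1 < p.2}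

/-- `A₁ ∈ S^{d×(d(d-1)/2)}`: the column indexed by `i < j` has entry `2` in row `i`,
entry `3` in row `j` and `0` elsewhere. -/
def matA1 (d : ℕ) : Matrix (Fin d) (PairIdx d) S4 :=
  fun i p => if i = p.1.1 then s2 else if i = p.1.2 then s3 else s0

/-- `A = [A₀, A₁]`. -/
def matA (d : ℕ) : Matrix (Fin d) (Fin (d - 1) ⊕ PairIdx d) S4 :=
  Matrix.fromCols (matA0 d) (matA1 d)

/-- `B ∈ S^{d×1}`: all entries `2`. -/
def matB (d : ℕ) : Matrix (Fin d) (Fin 1) S4 := fun _ _ => s2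

/-- `C ∈ S^{d×1}`: entry `2` in row `1`, `0` elsewhere. -/
def matC (d : ℕ) : Matrix (Fin d) (Fin 1) S4 := fun i _ => if i.val = 0 then s2 else s0

/-- `E = [A,B,C,C]` (the case `d ≡ 0 mod 2`). -/
def matE0 (d : ℕ) := Matrix.fromCols (matA d)
  (Matrix.fromCols (matB d) (Matrix.fromCols (matC d) (matC d)))

/-- `E = [A,B,B]` (the case `d ≡ 1 mod 4`). -/
def matE1 (d : ℕ) := Matrix.fromCols (matA d) (Matrix.fromCols (matB d) (matB d))

/-- `F = [E,C,C,C,C] = [A,C,C,C,C]` (the case `d ≡ 3 mod 4`; there `E = A`). -/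
def matF3 (d : ℕ) := Matrix.fromCols (matA d)
  (Matrix.fromCols (matC d)
    (Matrix.fromCols (matC d) (Matrix.fromCols (matC d) (matC d))))


namespace SWAux
open Finset

variable {d : ℕ}
local notation "P" => MvPolynomial (Fin d) (ZMod 2)
local notation "Q" => MvPolynomial (Fin d) (ZMod 2) ⧸ Jideal d
local notation "pr" => Ideal.Quotient.mk (Jideal d)

lemma twoP : (2 : P) = 0 := by
  have : CharP (MvPolynomial (Fin d) (ZMod 2)) 2 := inferInstance
  exact CharTwo.two_eq_zero

lemma addSelf (p : P) : p + p = 0 := by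
  have : CharP (MvPolynomial (Fin d) (ZMod 2)) 2 := inferInstance
  exact CharTwo.add_self_eq_zero p

/-! ### Linear form helpers -/

lemma lin_pair (a b : Fin d) (hab : a ≠ b) (c : Fin d → ZMod 2)
    (hc : ∀ i, c i = if i = a ∨ i = b then 1 else 0) :
    (∑ i, C (c i) * X i : P) = X a + X b := by
  have key : ∀ i : Fin d, C (c i) * X i
      = ((if i = a then X i else 0) + (if i = b then X i else 0) : P) := by
    intro i
    rw [hc]
    by_cases h1 : i = a <;> by_cases h2 : i = b
    · exact absurd (h1 ▸ h2) hab
    · simp [h1, h2, hab]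
    · simp [h1, h2, Ne.symm hab]
    · simp [h1, h2]
  rw [Finset.sum_congr rfl (fun i _ => key i), Finset.sum_add_distrib,
    Finset.sum_ite_eq' univ a, Finset.sum_ite_eq' univ b]
  simp

lemma lin_single (a : Fin d) (c : Fin d → ZMod 2)
    (hc : ∀ i, c i = if i = a then 1 else 0) :
    (∑ i, C (c i) * X i : P) = X a := by
  have key : ∀ i : Fin d, C (c i) * X i = ((if i = a then X i else 0) : P) := by
    intro i; rw [hc]; by_cases h1 : i = a <;> simp [h1]
  rw [Finset.sum_congr rfl (fun i _ => key i), Finset.sum_ite_eq' univ a]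
  simp

lemma lin_zero (c : Fin d → ZMod 2) (hc : ∀ i, c i = 0) :
    (∑ i, C (c i) * X i : P) = 0 := by simp [hc]

lemma lin_all (c : Fin d → ZMod 2) (hc : ∀ i, c i = 1) :
    (∑ i, C (c i) * X i : P) = ∑ i, X i := by simp [hc]

/-- The last row index. -/
def dl (hd : 2 ≤ d) : Fin d := ⟨d - 1, by omega⟩
/-- Embed `Fin (d-1)` into `Fin d`. -/
def emb (l : Fin (d - 1)) : Fin d := ⟨l.val, by have := l.isLt; omega⟩

lemma emb_ne_dl (hd : 2 ≤ d) (l : Fin (d - 1)) : emb l ≠ dl hd := by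
  have := l.isLt
  simp only [emb, dl, Fin.mk.injEq, Ne]
  omega

/-! ### The linear forms of the basic blocks -/

lemma alphaP_matA0 (hd : 2 ≤ d) (l : Fin (d - 1)) :
    alphaP (matA0 d) l = X (emb l) + X (dl hd) := by
  apply lin_pair _ _ (emb_ne_dl hd l)
  intro i
  simp only [matA0]
  by_cases h : i.val = l.val ∨ i.val = d - 1
  · rw [if_pos h, if_pos]
    · rfl
    · rcases h with h | h
      · exact Or.inl (Fin.ext h)
      · exact Or.inr (Fin.ext h)
  · rw [if_neg h, if_neg]
    · rfl
    · rintro (h' | h') <;> exact h (by rcases h' with rfl <;> simp [emb, dl])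

lemma betaP_matA0 (l : Fin (d - 1)) : betaP (matA0 d) l = alphaP (matA0 d) l := by
  unfold betaP alphaP
  apply Finset.sum_congr rfl
  intro i _
  congr 1
  simp only [matA0]
  split <;> rfl

lemma alphaP_matA1 (p : PairIdx d) : alphaP (matA1 d) p = X p.1.1 := by
  apply lin_single
  intro i
  simp only [matA1]
  by_cases h1 : i = p.1.1
  · simp [h1, s2, Sα]
  · rw [if_neg h1, if_neg h1]
    by_cases h2 : i = p.1.2 <;> simp [h2, s3, s0, Sα]

lemma betaP_matA1 (p : PairIdx d) : betaP (matA1 d) p = X p.1.2 := by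
  apply lin_single
  intro i
  have hne : p.1.1 ≠ p.1.2 := ne_of_lt p.2
  simp only [matA1]
  by_cases h1 : i = p.1.1
  · rw [if_pos h1, if_neg (by rw [h1]; exact hne)]
    simp [s2, Sβ]
  · rw [if_neg h1]
    by_cases h2 : i = p.1.2 <;> simp [h1, h2, s3, s0, Sβ]

lemma alphaP_matB (j : Fin 1) : alphaP (matB d) j = ∑ i, X i := by
  apply lin_all; intro i; rfl

lemma betaP_matB (j : Fin 1) : betaP (matB d) j = 0 := by
  apply lin_zero; intro i; rfl

lemma alphaP_matC (hd : 2 ≤ d) (j : Fin 1) :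
    alphaP (matC d) j = X (⟨0, by exact Nat.zero_lt_of_lt hd⟩ : Fin d) := by
  apply lin_single
  intro i
  simp only [matC]
  by_cases h : i = (⟨0, by exact Nat.zero_lt_of_lt hd⟩ : Fin d)
  · rw [if_pos (by simp [h]), if_pos h]; rfl
  · rw [if_neg, if_neg h]
    · rfl
    · intro hv; exact h (Fin.ext hv)

lemma betaP_matC (j : Fin 1) : betaP (matC d) j = 0 := by
  apply lin_zero
  intro i
  simp only [matC]
  split <;> rfl

/-! ### fromColumns lemmas -/

variable {κ₁ κ₂ : Type*}

lemma alphaP_fc_inl (M : Matrix (Fin d) κ₁ S4) (N : Matrix (Fin d) κ₂ S4) (j : κ₁) :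
    alphaP (Matrix.fromCols M N) (Sum.inl j) = alphaP M j := by
  unfold alphaP
  exact Finset.sum_congr rfl fun i _ => by rw [Matrix.fromCols_apply_inl]

lemma alphaP_fc_inr (M : Matrix (Fin d) κ₁ S4) (N : Matrix (Fin d) κ₂ S4) (j : κ₂) :
    alphaP (Matrix.fromCols M N) (Sum.inr j) = alphaP N j := by
  unfold alphaP
  exact Finset.sum_congr rfl fun i _ => by rw [Matrix.fromCols_apply_inr]

lemma betaP_fc_inl (M : Matrix (Fin d) κ₁ S4) (N : Matrix (Fin d) κ₂ S4) (j : κ₁) :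
    betaP (Matrix.fromCols M N) (Sum.inl j) = betaP M j := by
  unfold betaP
  exact Finset.sum_congr rfl fun i _ => by rw [Matrix.fromCols_apply_inl]

lemma betaP_fc_inr (M : Matrix (Fin d) κ₁ S4) (N : Matrix (Fin d) κ₂ S4) (j : κ₂) :
    betaP (Matrix.fromCols M N) (Sum.inr j) = betaP N j := by
  unfold betaP
  exact Finset.sum_congr rfl fun i _ => by rw [Matrix.fromCols_apply_inr]

lemma theta_fc_inl (M : Matrix (Fin d) κ₁ S4) (N : Matrix (Fin d) κ₂ S4) (j : κ₁) :
    thetaP (Matrix.fromCols M N) (Sum.inl j) = thetaP M j := by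
  unfold thetaP; rw [alphaP_fc_inl, betaP_fc_inl]

lemma theta_fc_inr (M : Matrix (Fin d) κ₁ S4) (N : Matrix (Fin d) κ₂ S4) (j : κ₂) :
    thetaP (Matrix.fromCols M N) (Sum.inr j) = thetaP N j := by
  unfold thetaP; rw [alphaP_fc_inr, betaP_fc_inr]

/-! ### Pair-indexed sums and products -/

@[to_additive]
lemma pair_prod {M : Type*} [CommMonoid M] (F : Fin d → M) :
    ∏ p : PairIdx d, (F p.1.1 * F p.1.2) = ∏ i, F i ^ (d - 1) := by
  have h1 : ∏ p : PairIdx d, (F p.1.1 * F p.1.2)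
      = ∏ q ∈ univ.filter (fun q : Fin d × Fin d => q.1 < q.2), (F q.1 * F q.2) := by
    exact (Finset.prod_subtype (univ.filter fun q : Fin d × Fin d => q.1 < q.2)
      (fun x => by simp) (fun q => F q.1 * F q.2)).symm
  rw [h1, Finset.prod_mul_distrib]
  have h2 : ∏ q ∈ univ.filter (fun q : Fin d × Fin d => q.1 < q.2), F q.2
      = ∏ q ∈ univ.filter (fun q : Fin d × Fin d => q.2 < q.1), F q.1 := by
    apply Finset.prod_equiv (Equiv.prodComm (Fin d) (Fin d))
    · intro q; simp [and_comm]
    · intro q _; rfl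
  rw [h2, ← Finset.prod_union]
  · have h3 : univ.filter (fun q : Fin d × Fin d => q.1 < q.2)
        ∪ univ.filter (fun q : Fin d × Fin d => q.2 < q.1) = Finset.offDiag univ := by
      ext q
      simp only [Finset.mem_union, Finset.mem_filter, Finset.mem_offDiag, Finset.mem_univ,
        true_and]
      constructor
      · rintro (h | h)
        exacts [ne_of_lt h, (ne_of_gt h)]
      · exact fun h => lt_or_gt_of_ne h
    rw [h3]
    rw [Finset.prod_finset_product (Finset.offDiag univ) univ (fun i => univ.erase i)
      (by intro q; simp [Finset.mem_offDiag, Finset.mem_erase, eq_comm, Ne, and_comm])]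
    apply Finset.prod_congr rfl
    intro i _
    rw [show (∏ a ∈ univ.erase i, F (i, a).1) = ∏ _a ∈ univ.erase i, F i from rfl,
      Finset.prod_const, Finset.card_erase_of_mem (Finset.mem_univ i), Finset.card_univ,
      Fintype.card_fin]
  · rw [Finset.disjoint_filter]
    intro q _ h1 h2
    exact absurd (h1.trans h2) (lt_irrefl _)

/-! ### Membership facts for `J` -/

lemma mem_J_sq {i j : Fin d} (h : i ≠ j) : (X i ^ 2 + X j ^ 2 : P) ∈ Jideal d :=
  Ideal.subset_span (Or.inl ⟨i, j, h, rfl⟩)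

lemma mem_J_mul {i j : Fin d} (h : i ≠ j) : (X i * X j : P) ∈ Jideal d :=
  Ideal.subset_span (Or.inr ⟨i, j, h, rfl⟩)

lemma mem_J_sq' (i j : Fin d) : (X i ^ 2 + X j ^ 2 : P) ∈ Jideal d := by
  rcases eq_or_ne i j with rfl | h
  · rw [addSelf]; exact zero_mem _
  · exact mem_J_sq h

lemma exists_ne (hd : 2 ≤ d) (i : Fin d) : ∃ j : Fin d, j ≠ i := by
  by_cases h : i = (⟨0, by exact Nat.zero_lt_of_lt hd⟩ : Fin d)
  · exact ⟨⟨1, by omega⟩, by rw [h]; simp [Fin.ext_iff]⟩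
  · exact ⟨⟨0, by exact Nat.zero_lt_of_lt hd⟩, fun h' => h h'.symm⟩

lemma mem_J_cube (hd : 2 ≤ d) (i : Fin d) : (X i ^ 3 : P) ∈ Jideal d := by
  obtain ⟨j, hj⟩ := exists_ne hd i
  have key : (X i ^ 3 : P) = X i * (X i ^ 2 + X j ^ 2) + (X i * X j) * X j := by
    linear_combination (-(X i * X j ^ 2) : P) * twoP
  rw [key]
  exact add_mem (Ideal.mul_mem_left _ _ (mem_J_sq' i j))
    (Ideal.mul_mem_right _ _ (mem_J_mul (fun h => hj h.symm)))

lemma hsq_eq (a b : Fin d) : (X a + X b : P) * (X a + X b) = X a ^ 2 + X b ^ 2 := by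
  linear_combination (X a * X b : P) * twoP

/-! ### The quotient ring -/

noncomputable def yq (i : Fin d) : Q := pr (X i)
noncomputable def tq (hd : 2 ≤ d) : Q := pr (X (⟨0, by exact Nat.zero_lt_of_lt hd⟩ : Fin d) ^ 2)

lemma q_addSelf (a : Q) : a + a = 0 := by
  obtain ⟨p, rfl⟩ := Ideal.Quotient.mk_surjective (I := Jideal d) a
  show pr _ + pr _ = 0
  rw [← map_add, addSelf, map_zero]

lemma hyy (hd : 2 ≤ d) (i j : Fin d) : yq i * yq j = if i = j then tq hd else 0 := by
  rcases eq_or_ne i j with rfl | h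
  · rw [if_pos rfl]
    show pr (X i) * pr (X i) = pr _
    rw [← map_mul, Ideal.Quotient.mk_eq_mk_iff_sub_mem]
    have : (X i * X i - X (⟨0, by exact Nat.zero_lt_of_lt hd⟩ : Fin d) ^ 2 : P)
        = X i ^ 2 + X (⟨0, by exact Nat.zero_lt_of_lt hd⟩ : Fin d) ^ 2 := by
      linear_combination (-(X (⟨0, by exact Nat.zero_lt_of_lt hd⟩ : Fin d) ^ 2) : P) * twoP
    rw [this]
    exact mem_J_sq' _ _
  · rw [if_neg h]
    show pr (X i) * pr (X j) = 0
    rw [← map_mul, Ideal.Quotient.eq_zero_iff_mem]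
    exact mem_J_mul h

lemma hyt (hd : 2 ≤ d) (i : Fin d) : yq i * tq hd = 0 := by
  show pr (X i) * pr _ = 0
  rw [← map_mul, Ideal.Quotient.eq_zero_iff_mem]
  set z : Fin d := ⟨0, by exact Nat.zero_lt_of_lt hd⟩
  rcases eq_or_ne i z with rfl | h
  · have : (X z * X z ^ 2 : P) = X z ^ 3 := by ring
    rw [this]; exact mem_J_cube hd z
  · have : (X i * X z ^ 2 : P) = (X i * X z) * X z := by ring
    rw [this]; exact Ideal.mul_mem_right _ _ (mem_J_mul h)

lemma htt (hd : 2 ≤ d) : tq hd * tq hd = 0 := by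
  show pr _ * pr _ = 0
  rw [← map_mul, Ideal.Quotient.eq_zero_iff_mem]
  set z : Fin d := ⟨0, by exact Nat.zero_lt_of_lt hd⟩
  have : (X z ^ 2 * X z ^ 2 : P) = X z * X z ^ 3 := by ring
  rw [this]
  exact Ideal.mul_mem_left _ _ (mem_J_cube hd z)

lemma nsmul_parity {A : Type*} [AddCommMonoid A] (a : A) (h : a + a = 0) (n : ℕ) :
    n • a = if n % 2 = 0 then 0 else a := by
  induction n with
  | zero => simp
  | succ n ih =>
    rw [succ_nsmul, ih]
    rcases Nat.even_or_odd n with he | ho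
    · have h1 := Nat.even_iff.mp he
      rw [if_pos h1, if_neg (by omega), zero_add]
    · have h1 := Nat.odd_iff.mp ho
      rw [if_neg (by omega), if_pos (by omega), h]

lemma one_add_yq_sq (hd : 2 ≤ d) (i : Fin d) : (1 + yq i) ^ 2 = 1 + tq hd := by
  have h := hyy hd i i
  rw [if_pos rfl] at h
  have : (1 + yq i) ^ 2 = 1 + (yq i + yq i) + yq i * yq i := by ring
  rw [this, q_addSelf, add_zero, h]

lemma one_add_tq_pow (hd : 2 ≤ d) (n : ℕ) : (1 + tq hd) ^ n = 1 + n • tq hd := by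
  induction n with
  | zero => simp
  | succ n ih =>
    rw [pow_succ, ih, nsmul_eq_mul, nsmul_eq_mul]
    push_cast
    linear_combination ((n : Q)) * htt hd

lemma prodA (hd : 2 ≤ d) (s : Finset (Fin d)) :
    ∏ i ∈ s, (1 + yq i) = 1 + ∑ i ∈ s, (yq i : Q) := by
  induction s using Finset.cons_induction with
  | empty => simp
  | cons b s hb ih =>
    rw [Finset.prod_cons, ih, Finset.sum_cons]
    have hcross : yq b * ∑ i ∈ s, yq i = 0 := by
      rw [Finset.mul_sum]
      apply Finset.sum_eq_zero
      intro i hi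
      rw [hyy hd b i, if_neg (by rintro rfl; exact hb hi)]
    linear_combination hcross

lemma prodB (hd : 2 ≤ d) (s : Finset (Fin d)) :
    ∏ i ∈ s, (1 + yq i + tq hd) = 1 + (∑ i ∈ s, (yq i : Q)) + s.card • tq hd := by
  induction s using Finset.cons_induction with
  | empty => simp
  | cons b s hb ih =>
    rw [Finset.prod_cons, ih, Finset.sum_cons, Finset.card_cons]
    have hcross : yq b * ∑ i ∈ s, yq i = 0 := by
      rw [Finset.mul_sum]
      apply Finset.sum_eq_zero
      intro i hi
      rw [hyy hd b i, if_neg (by rintro rfl; exact hb hi)]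
    have hts : tq hd * ∑ i ∈ s, yq i = 0 := by
      rw [Finset.mul_sum]
      apply Finset.sum_eq_zero
      intro i hi
      rw [mul_comm]; exact hyt hd i
    rw [nsmul_eq_mul, nsmul_eq_mul]
    push_cast
    linear_combination hcross + hts + ((s.card : Q)) * hyt hd b + ((s.card : Q)) * htt hd

lemma u_sq (hd : 2 ≤ d) : (∑ i, (yq i : Q)) ^ 2 = d • tq hd := by
  rw [sq, Finset.sum_mul_sum]
  calc ∑ i : Fin d, ∑ j : Fin d, yq i * yq j
      = ∑ i : Fin d, ∑ j : Fin d, (if i = j then tq hd else 0) := by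
        apply Finset.sum_congr rfl; intro i _
        apply Finset.sum_congr rfl; intro j _
        exact hyy hd i j
    _ = ∑ _i : Fin d, tq hd := by
        apply Finset.sum_congr rfl; intro i _
        rw [Finset.sum_ite_eq univ i (fun _ => tq hd), if_pos (Finset.mem_univ i)]
    _ = d • tq hd := by rw [Finset.sum_const, Finset.card_univ, Fintype.card_fin]

end SWAux

namespace SWAux
open Finset

variable {d : ℕ}
local notation "P" => MvPolynomial (Fin d) (ZMod 2)
local notation "Q" => MvPolynomial (Fin d) (ZMod 2) ⧸ Jideal d
local notation "pr" => Ideal.Quotient.mk (Jideal d)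
variable {κ₁ κ₂ : Type*}

/-! ### The functional φ and non-membership of `x₀²` -/

noncomputable def phi (p : P) : ZMod 2 := ∑ k : Fin d, coeff (Finsupp.single k 2) p

lemma single_sub_single (k : Fin d) :
    (Finsupp.single k 2 - Finsupp.single k 1 : Fin d →₀ ℕ) = Finsupp.single k 1 := by
  ext a
  rw [Finsupp.tsub_apply]
  by_cases h : k = a <;> simp [Finsupp.single_apply, h]

lemma phi_mul_XX (f : P) {i j : Fin d} (hij : i ≠ j) : phi (f * (X i * X j)) = 0 := by
  unfold phi
  apply Finset.sum_eq_zero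
  intro k _
  rw [← mul_assoc, coeff_mul_X']
  split_ifs with h
  · have hk : j = k := by
      simpa [Finsupp.support_single_ne_zero k (two_ne_zero : (2:ℕ) ≠ 0)] using h
    subst hk
    rw [single_sub_single, coeff_mul_X']
    rw [if_neg]
    simp only [Finsupp.support_single_ne_zero j (one_ne_zero : (1:ℕ) ≠ 0),
      Finset.mem_singleton]
    exact hij
  · rfl

lemma phi_mul_sq (f : P) (i : Fin d) : phi (f * X i ^ 2) = coeff 0 f := by
  unfold phi
  rw [Finset.sum_eq_single i]
  · rw [show (f * X i ^ 2 : P) = (f * X i) * X i by ring, coeff_mul_X']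
    rw [if_pos (by simp [Finsupp.support_single_ne_zero i (two_ne_zero : (2:ℕ) ≠ 0)])]
    rw [single_sub_single, coeff_mul_X']
    rw [if_pos (by simp [Finsupp.support_single_ne_zero i (one_ne_zero : (1:ℕ) ≠ 0)])]
    simp
  · intro k _ hk
    rw [show (f * X i ^ 2 : P) = (f * X i) * X i by ring, coeff_mul_X']
    rw [if_neg]
    simp only [Finsupp.support_single_ne_zero k (two_ne_zero : (2:ℕ) ≠ 0),
      Finset.mem_singleton]
    exact fun h => hk h.symm
  · intro h
    exact absurd (Finset.mem_univ i) h

lemma phi_J {p : P} (hp : p ∈ Jideal d) : ∀ f : P, phi (f * p) = 0 := by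
  refine Submodule.span_induction ?_ ?_ ?_ ?_ hp
  · rintro x (⟨i, j, hij, rfl⟩ | ⟨i, j, hij, rfl⟩)
    · intro f
      rw [mul_add]
      have : phi (f * X i ^ 2 + f * X j ^ 2) = phi (f * X i ^ 2) + phi (f * X j ^ 2) := by
        unfold phi
        rw [← Finset.sum_add_distrib]
        exact Finset.sum_congr rfl (fun k _ => coeff_add _ _ _)
      rw [this, phi_mul_sq, phi_mul_sq]
      exact CharTwo.add_self_eq_zero _
    · exact fun f => phi_mul_XX f hij
  · intro f; rw [mul_zero]; unfold phi; simp
  · intro x y _ _ hx hy f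
    rw [mul_add]
    have : phi (f * x + f * y) = phi (f * x) + phi (f * y) := by
      unfold phi
      rw [← Finset.sum_add_distrib]
      exact Finset.sum_congr rfl (fun k _ => coeff_add _ _ _)
    rw [this, hx f, hy f, add_zero]
  · intro a x _ hx f
    rw [smul_eq_mul, show (f * (a * x) : P) = (f * a) * x by ring]
    exact hx (f * a)

lemma X0sq_not_mem_J (hd : 2 ≤ d) : (X (⟨0, by exact Nat.zero_lt_of_lt hd⟩ : Fin d) ^ 2 : P) ∉ Jideal d := by
  intro hmem
  have h0 := phi_J hmem 1
  rw [one_mul] at h0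
  have h1 : phi (X (⟨0, by exact Nat.zero_lt_of_lt hd⟩ : Fin d) ^ 2 : P) = 1 := by
    unfold phi
    rw [Finset.sum_eq_single (⟨0, by exact Nat.zero_lt_of_lt hd⟩ : Fin d)]
    · rw [coeff_X_pow, if_pos rfl]
    · intro k _ hk
      rw [coeff_X_pow, if_neg]
      intro h
      exact hk (((Finsupp.single_left_inj (two_ne_zero : (2:ℕ) ≠ 0)).mp h).symm)
    · intro h; exact absurd (Finset.mem_univ _) h
  rw [h0] at h1
  exact one_ne_zero h1.symm

/-! ### Part (ii): the characteristic ideal -/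

lemma charIdeal_fc (M : Matrix (Fin d) κ₁ S4) (N : Matrix (Fin d) κ₂ S4)
    (hN : ∀ k, thetaP N k = 0) :
    charIdeal (Matrix.fromCols M N) = charIdeal M := by
  apply le_antisymm
  · rw [charIdeal, Ideal.span_le]
    rintro _ ⟨j, rfl⟩
    cases j with
    | inl a => rw [theta_fc_inl]; exact Ideal.subset_span ⟨a, rfl⟩
    | inr k => rw [theta_fc_inr, hN k]; exact zero_mem _
  · rw [charIdeal, Ideal.span_le]
    rintro _ ⟨a, rfl⟩
    rw [← theta_fc_inl M N a]
    exact Ideal.subset_span ⟨Sum.inl a, rfl⟩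

lemma theta_matB (j : Fin 1) : thetaP (matB d) j = 0 := by
  rw [thetaP, betaP_matB, mul_zero]

lemma theta_matC (j : Fin 1) : thetaP (matC d) j = 0 := by
  rw [thetaP, betaP_matC, mul_zero]

lemma charIdeal_matA (hd : 2 ≤ d) : charIdeal (matA d) = Jideal d := by
  apply le_antisymm
  · rw [charIdeal, Ideal.span_le]
    rintro _ ⟨j, rfl⟩
    cases j with
    | inl l =>
      rw [matA, theta_fc_inl, thetaP, betaP_matA0, alphaP_matA0 hd, hsq_eq]
      exact mem_J_sq (emb_ne_dl hd l)
    | inr p =>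
      rw [matA, theta_fc_inr, thetaP, alphaP_matA1, betaP_matA1]
      exact mem_J_mul (ne_of_lt p.2)
  · rw [Jideal, Ideal.span_le]
    have hsqmem : ∀ i : Fin d, (X i ^ 2 + X (dl hd) ^ 2 : P) ∈ charIdeal (matA d) := by
      intro i
      by_cases hi : i = dl hd
      · rw [hi, addSelf]; exact zero_mem _
      · have hlt : i.val < d - 1 := by
          have := i.isLt
          simp only [dl, Fin.ext_iff] at hi
          omega
        have key : (X i ^ 2 + X (dl hd) ^ 2 : P) = thetaP (matA d) (Sum.inl ⟨i.val, hlt⟩) := by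
          rw [matA, theta_fc_inl, thetaP, betaP_matA0, alphaP_matA0 hd, hsq_eq]
          have : emb (⟨i.val, hlt⟩ : Fin (d - 1)) = i := Fin.ext rfl
          rw [this]
        rw [key]
        exact Ideal.subset_span ⟨_, rfl⟩
    rintro q (⟨i, j, hij, rfl⟩ | ⟨i, j, hij, rfl⟩)
    · have key : (X i ^ 2 + X j ^ 2 : P)
          = (X i ^ 2 + X (dl hd) ^ 2) + (X j ^ 2 + X (dl hd) ^ 2) := by
        linear_combination (-(X (dl hd) ^ 2) : P) * twoP
      rw [key]
      exact add_mem (hsqmem i) (hsqmem j)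
    · rcases lt_or_gt_of_ne hij with h | h
      · have key : (X i * X j : P) = thetaP (matA d) (Sum.inr ⟨(i, j), h⟩) := by
          rw [matA, theta_fc_inr, thetaP, alphaP_matA1, betaP_matA1]
        rw [key]
        exact Ideal.subset_span ⟨_, rfl⟩
      · have key : (X i * X j : P) = thetaP (matA d) (Sum.inr ⟨(j, i), h⟩) := by
          rw [matA, theta_fc_inr, thetaP, alphaP_matA1, betaP_matA1, mul_comm]
        rw [key]
        exact Ideal.subset_span ⟨_, rfl⟩

lemma charIdeal_E0 (hd : 2 ≤ d) : charIdeal (matE0 d) = Jideal d := by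
  have hN : ∀ k : Fin 1 ⊕ (Fin 1 ⊕ Fin 1),
      thetaP (Matrix.fromCols (matB d) (Matrix.fromCols (matC d) (matC d))) k = 0 := by
    rintro (j | j | j)
    · rw [theta_fc_inl, theta_matB]
    · rw [theta_fc_inr, theta_fc_inl, theta_matC]
    · rw [theta_fc_inr, theta_fc_inr, theta_matC]
  rw [matE0, charIdeal_fc _ _ hN, charIdeal_matA hd]

lemma charIdeal_E1 (hd : 2 ≤ d) : charIdeal (matE1 d) = Jideal d := by
  have hN : ∀ k : Fin 1 ⊕ Fin 1,
      thetaP (Matrix.fromCols (matB d) (matB d)) k = 0 := by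
    rintro (j | j)
    · rw [theta_fc_inl, theta_matB]
    · rw [theta_fc_inr, theta_matB]
  rw [matE1, charIdeal_fc _ _ hN, charIdeal_matA hd]

lemma charIdeal_F3 (hd : 2 ≤ d) : charIdeal (matF3 d) = Jideal d := by
  have hN : ∀ k : Fin 1 ⊕ (Fin 1 ⊕ (Fin 1 ⊕ Fin 1)),
      thetaP (Matrix.fromCols (matC d)
        (Matrix.fromCols (matC d) (Matrix.fromCols (matC d) (matC d)))) k = 0 := by
    rintro (j | j | j | j)
    · rw [theta_fc_inl, theta_matC]
    · rw [theta_fc_inr, theta_fc_inl, theta_matC]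
    · rw [theta_fc_inr, theta_fc_inr, theta_fc_inl, theta_matC]
    · rw [theta_fc_inr, theta_fc_inr, theta_fc_inr, theta_matC]
  rw [matF3, charIdeal_fc _ _ hN, charIdeal_matA hd]

end SWAux

namespace SWAux
open Finset

variable {d : ℕ}
local notation "P" => MvPolynomial (Fin d) (ZMod 2)
local notation "Q" => MvPolynomial (Fin d) (ZMod 2) ⧸ Jideal d
local notation "pr" => Ideal.Quotient.mk (Jideal d)
variable {κ₁ κ₂ : Type*}

/-! ### Part (i): vanishing of the degree-one part -/

lemma sum_ab_fc [Fintype κ₁] [Fintype κ₂] (M : Matrix (Fin d) κ₁ S4)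
    (N : Matrix (Fin d) κ₂ S4) :
    (∑ j, (alphaP (Matrix.fromCols M N) j + betaP (Matrix.fromCols M N) j))
      = (∑ j, (alphaP M j + betaP M j)) + ∑ j, (alphaP N j + betaP N j) := by
  rw [Fintype.sum_sum_type]
  congr 1
  all_goals
    first
      | exact Finset.sum_congr rfl fun j _ => by rw [alphaP_fc_inl, betaP_fc_inl]
      | exact Finset.sum_congr rfl fun j _ => by rw [alphaP_fc_inr, betaP_fc_inr]

lemma sum_ab_matA0 : (∑ l, (alphaP (matA0 d) l + betaP (matA0 d) l)) = 0 :=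
  Finset.sum_eq_zero fun l _ => by rw [betaP_matA0, addSelf]

lemma sum_ab_matA1 :
    (∑ p, (alphaP (matA1 d) p + betaP (matA1 d) p)) = ∑ i, (d - 1) • (X i : P) := by
  have key : ∀ p : PairIdx d,
      alphaP (matA1 d) p + betaP (matA1 d) p = (X p.1.1 : P) + X p.1.2 :=
    fun p => by rw [alphaP_matA1, betaP_matA1]
  rw [Finset.sum_congr rfl (fun p _ => key p)]
  exact pair_sum (fun i => (X i : P))

lemma sum_ab_matA (hd : 2 ≤ d) :
    (∑ j, (alphaP (matA d) j + betaP (matA d) j)) = ∑ i, (d - 1) • (X i : P) := by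
  rw [matA, sum_ab_fc, sum_ab_matA0, sum_ab_matA1, zero_add]

lemma sum_ab_matB : (∑ j, (alphaP (matB d) j + betaP (matB d) j)) = ∑ i, (X i : P) := by
  rw [Fin.sum_univ_one, alphaP_matB, betaP_matB, add_zero]

lemma sum_ab_matC (hd : 2 ≤ d) :
    (∑ j, (alphaP (matC d) j + betaP (matC d) j)) = X (⟨0, by exact Nat.zero_lt_of_lt hd⟩ : Fin d) := by
  rw [Fin.sum_univ_one, alphaP_matC hd, betaP_matC, add_zero]

lemma sum_ab_E0 (hd : 2 ≤ d) (h2 : d % 2 = 0) :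
    (∑ j, (alphaP (matE0 d) j + betaP (matE0 d) j)) = 0 := by
  rw [matE0, sum_ab_fc, sum_ab_fc, sum_ab_fc, sum_ab_matA hd, sum_ab_matB, sum_ab_matC hd]
  have hodd : (∑ i, (d - 1) • (X i : P)) = ∑ i, (X i : P) :=
    Finset.sum_congr rfl fun i _ => by
      rw [nsmul_parity _ (addSelf _), if_neg (by omega)]
  rw [hodd, addSelf (X (⟨0, by exact Nat.zero_lt_of_lt hd⟩ : Fin d)), add_zero, addSelf]

lemma sum_ab_E1 (hd : 2 ≤ d) (h4 : d % 4 = 1) :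
    (∑ j, (alphaP (matE1 d) j + betaP (matE1 d) j)) = 0 := by
  rw [matE1, sum_ab_fc, sum_ab_fc, sum_ab_matA hd, sum_ab_matB]
  have heven : (∑ i, (d - 1) • (X i : P)) = 0 :=
    Finset.sum_eq_zero fun i _ => by
      rw [nsmul_parity _ (addSelf _), if_pos (by omega)]
  rw [heven, addSelf, add_zero]

lemma sum_ab_F3 (hd : 2 ≤ d) (h4 : d % 4 = 3) :
    (∑ j, (alphaP (matF3 d) j + betaP (matF3 d) j)) = 0 := by
  rw [matF3, sum_ab_fc, sum_ab_fc, sum_ab_fc, sum_ab_fc, sum_ab_matA hd, sum_ab_matC hd]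
  have heven : (∑ i, (d - 1) • (X i : P)) = 0 :=
    Finset.sum_eq_zero fun i _ => by
      rw [nsmul_parity _ (addSelf _), if_pos (by omega)]
  rw [heven, addSelf, add_zero, addSelf, add_zero]

/-! ### Part (iii): the Stiefel–Whitney polynomial -/

lemma sw_fc [Fintype κ₁] [Fintype κ₂] (M : Matrix (Fin d) κ₁ S4)
    (N : Matrix (Fin d) κ₂ S4) :
    swPoly (Matrix.fromCols M N) = swPoly M * swPoly N := by
  unfold swPoly
  rw [Fintype.prod_sum_type]
  congr 1
  all_goals
    first
      | exact Finset.prod_congr rfl fun j _ => by rw [alphaP_fc_inl, betaP_fc_inl]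
      | exact Finset.prod_congr rfl fun j _ => by rw [alphaP_fc_inr, betaP_fc_inr]

lemma sw_matA0 : swPoly (matA0 d) = 1 :=
  Finset.prod_eq_one fun l _ => by rw [betaP_matA0, add_assoc, addSelf, add_zero]

lemma sw_matB : swPoly (matB d) = 1 + ∑ i, (X i : P) := by
  rw [swPoly, Fin.prod_univ_one, alphaP_matB, betaP_matB, add_zero]

lemma sw_matC (hd : 2 ≤ d) : swPoly (matC d) = 1 + X (⟨0, by exact Nat.zero_lt_of_lt hd⟩ : Fin d) := by
  rw [swPoly, Fin.prod_univ_one, alphaP_matC hd, betaP_matC, add_zero]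

lemma pr_sw_matA1 (hd : 2 ≤ d) :
    pr (swPoly (matA1 d)) = ∏ i, (1 + yq i) ^ (d - 1) := by
  rw [swPoly, map_prod]
  have key : ∀ p : PairIdx d, pr (1 + alphaP (matA1 d) p + betaP (matA1 d) p)
      = (1 + yq p.1.1) * (1 + yq p.1.2) := by
    intro p
    rw [alphaP_matA1, betaP_matA1, map_add, map_add, map_one]
    have h := hyy hd p.1.1 p.1.2
    rw [if_neg (ne_of_lt p.2)] at h
    show 1 + yq p.1.1 + yq p.1.2 = _
    linear_combination -h
  rw [Finset.prod_congr rfl (fun p _ => key p)]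
  exact pair_prod (fun i => 1 + yq i)

lemma w1_even (hd : 2 ≤ d) (h2 : d % 2 = 0) :
    (∏ i, (1 + yq i) ^ (d - 1) : Q) = 1 + ∑ i, yq i := by
  obtain ⟨m, hm⟩ : ∃ m, d - 1 = 2 * m + 1 := ⟨(d - 2) / 2, by omega⟩
  have hfac : ∀ i : Fin d, (1 + yq i) ^ (d - 1) = (1 + m • tq hd) * (1 + yq i) := by
    intro i
    rw [hm, pow_succ, pow_mul, one_add_yq_sq hd, one_add_tq_pow hd]
  rcases Nat.even_or_odd m with he | ho
  · have key : ∀ i : Fin d, (1 + yq i) ^ (d - 1) = 1 + yq i := fun i => by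
      rw [hfac, nsmul_parity _ (q_addSelf _), if_pos (Nat.even_iff.mp he), add_zero, one_mul]
    rw [Finset.prod_congr rfl (fun i _ => key i)]
    exact prodA hd univ
  · have hmt : m • tq hd = tq hd := by
      rw [nsmul_parity _ (q_addSelf _), if_neg (by have := Nat.odd_iff.mp ho; omega)]
    have key : ∀ i : Fin d, (1 + yq i) ^ (d - 1) = 1 + yq i + tq hd := by
      intro i
      rw [hfac, hmt]
      linear_combination hyt hd i
    rw [Finset.prod_congr rfl (fun i _ => key i), prodB hd univ, card_univ, Fintype.card_fin]
    rw [nsmul_parity _ (q_addSelf _), if_pos h2, add_zero]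

lemma w1_one (hd : 2 ≤ d) (h4 : d % 4 = 1) :
    (∏ i, (1 + yq i) ^ (d - 1) : Q) = 1 := by
  obtain ⟨m, hm, hme⟩ : ∃ m, d - 1 = 2 * m ∧ m % 2 = 0 := ⟨(d - 1) / 2, by omega, by omega⟩
  apply Finset.prod_eq_one
  intro i _
  rw [hm, pow_mul, one_add_yq_sq hd, one_add_tq_pow hd, nsmul_parity _ (q_addSelf _),
    if_pos hme, add_zero]

lemma w1_three (hd : 2 ≤ d) (h4 : d % 4 = 3) :
    (∏ i, (1 + yq i) ^ (d - 1) : Q) = 1 + tq hd := by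
  obtain ⟨m, hm, hme⟩ : ∃ m, d - 1 = 2 * m ∧ m % 2 = 1 := ⟨(d - 1) / 2, by omega, by omega⟩
  have key : ∀ i : Fin d, (1 + yq i) ^ (d - 1) = 1 + tq hd := by
    intro i
    rw [hm, pow_mul, one_add_yq_sq hd, one_add_tq_pow hd, nsmul_parity _ (q_addSelf _),
      if_neg (by omega)]
  rw [Finset.prod_congr rfl (fun i _ => key i), Finset.prod_const, card_univ, Fintype.card_fin,
    one_add_tq_pow hd, nsmul_parity _ (q_addSelf _), if_neg (by omega)]

lemma pr_sw_matA (hd : 2 ≤ d) :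
    pr (swPoly (matA d)) = ∏ i, (1 + yq i) ^ (d - 1) := by
  rw [matA, sw_fc, sw_matA0, one_mul, pr_sw_matA1 hd]

lemma pr_sw_matB : pr (swPoly (matB d)) = 1 + ∑ i, yq i := by
  rw [sw_matB, map_add, map_one, map_sum]
  rfl

lemma pr_sw_matC (hd : 2 ≤ d) : pr (swPoly (matC d)) = 1 + yq (⟨0, by exact Nat.zero_lt_of_lt hd⟩ : Fin d) := by
  rw [sw_matC hd, map_add, map_one]
  rfl

lemma pr_one_add_X0sq (hd : 2 ≤ d) :
    pr ((1 : P) + X (⟨0, by exact Nat.zero_lt_of_lt hd⟩ : Fin d) ^ 2) = 1 + tq hd := by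
  rw [map_add, map_one]
  rfl

lemma swE0_q (hd : 2 ≤ d) (h2 : d % 2 = 0) :
    pr (swPoly (matE0 d)) = 1 + tq hd := by
  rw [matE0, sw_fc, sw_fc, sw_fc, map_mul, map_mul, map_mul, pr_sw_matA hd, w1_even hd h2,
    pr_sw_matB, pr_sw_matC hd]
  set z : Fin d := ⟨0, by exact Nat.zero_lt_of_lt hd⟩
  set u : Q := ∑ i, yq i
  have hzz : (1 + yq z) * (1 + yq z) = 1 + tq hd := by
    rw [← sq, one_add_yq_sq hd]
  have huu0 : u * u = 0 := by
    have h := u_sq hd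
    rw [sq] at h
    rw [h, nsmul_parity _ (q_addSelf _), if_pos h2]
  rw [hzz]
  linear_combination (1 + tq hd) * huu0 + (1 + tq hd) * q_addSelf u

lemma swE1_q (hd : 2 ≤ d) (h4 : d % 4 = 1) :
    pr (swPoly (matE1 d)) = 1 + tq hd := by
  rw [matE1, sw_fc, sw_fc, map_mul, map_mul, pr_sw_matA hd, w1_one hd h4, pr_sw_matB, one_mul]
  set u : Q := ∑ i, yq i
  have huu : u * u = tq hd := by
    have h := u_sq hd
    rw [sq] at h
    rw [h, nsmul_parity _ (q_addSelf _), if_neg (by omega)]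
  linear_combination huu + q_addSelf u

lemma swF3_q (hd : 2 ≤ d) (h4 : d % 4 = 3) :
    pr (swPoly (matF3 d)) = 1 + tq hd := by
  rw [matF3, sw_fc, sw_fc, sw_fc, sw_fc, map_mul, map_mul, map_mul, map_mul, pr_sw_matA hd,
    w1_three hd h4, pr_sw_matC hd]
  set z : Fin d := ⟨0, by exact Nat.zero_lt_of_lt hd⟩
  have hzz : (1 + yq z) * (1 + yq z) = 1 + tq hd := by
    rw [← sq, one_add_yq_sq hd]
  have h4c : (1 + yq z) * ((1 + yq z) * ((1 + yq z) * (1 + yq z))) = 1 := by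
    rw [show (1 + yq z) * ((1 + yq z) * ((1 + yq z) * (1 + yq z)))
        = ((1 + yq z) * (1 + yq z)) * ((1 + yq z) * (1 + yq z)) by ring, hzz]
    linear_combination htt hd + q_addSelf (tq hd)
  rw [h4c, mul_one]

end SWAux

/-- for `d ≥ 2` and the matrix `F` (per residue of `d`: `F = [A,B,C,C]` if
`d ≡ 0 mod 2`, `F = [A,B,B]` if `d ≡ 1 mod 4`, `F = [A,C,C,C,C]` if `d ≡ 3 mod 4`):
(i) `Σ_j (α_j^F + β_j^F) = 0`; (ii) `I_F = J`; (iii) `w(F) - (1 + x₁²) ∈ J`,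
while `x₁² ∉ J`. -/
theorem matF_sw_properties (d : ℕ) (hd : 2 ≤ d) :
    (d % 2 = 0 →
      (∑ j, (alphaP (matE0 d) j + betaP (matE0 d) j)) = 0 ∧
      charIdeal (matE0 d) = Jideal d ∧
      swPoly (matE0 d) - (1 + X (⟨0, by omega⟩ : Fin d) ^ 2) ∈ Jideal d) ∧
    (d % 4 = 1 →
      (∑ j, (alphaP (matE1 d) j + betaP (matE1 d) j)) = 0 ∧
      charIdeal (matE1 d) = Jideal d ∧
      swPoly (matE1 d) - (1 + X (⟨0, by omega⟩ : Fin d) ^ 2) ∈ Jideal d) ∧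
    (d % 4 = 3 →
      (∑ j, (alphaP (matF3 d) j + betaP (matF3 d) j)) = 0 ∧
      charIdeal (matF3 d) = Jideal d ∧
      swPoly (matF3 d) - (1 + X (⟨0, by omega⟩ : Fin d) ^ 2) ∈ Jideal d) ∧
    X (⟨0, by omega⟩ : Fin d) ^ 2 ∉ Jideal d := by
  refine ⟨fun h2 => ⟨SWAux.sum_ab_E0 hd h2, SWAux.charIdeal_E0 hd, ?_⟩,
    fun h4 => ⟨SWAux.sum_ab_E1 hd h4, SWAux.charIdeal_E1 hd, ?_⟩,
    fun h4 => ⟨SWAux.sum_ab_F3 hd h4, SWAux.charIdeal_F3 hd, ?_⟩,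
    SWAux.X0sq_not_mem_J hd⟩
  · exact Ideal.Quotient.eq.mp ((SWAux.swE0_q hd h2).trans (SWAux.pr_one_add_X0sq hd).symm)
  · exact Ideal.Quotient.eq.mp ((SWAux.swE1_q hd h4).trans (SWAux.pr_one_add_X0sq hd).symm)
  · exact Ideal.Quotient.eq.mp ((SWAux.swF3_q hd h4).trans (SWAux.pr_one_add_X0sq hd).symm)
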